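/- There exists a countable example space X and a countable class H ⊆ {0,1}^X satisfying UUS that is uniformly generatable but not PAC learnable (i.e. has infinite VC dimension). Concretely, X = ℤ and H = {x ↦ 1[x ∈ A or x ≤ 0] : A ⊆ ℕ, |A| < ∞} satisfies UUS, has C(H) = 0, and has VC(H) = ∞. -/
import Mathlib


open Set

variable {X : Type*}

/-- The set of distinct examples seen in the first `t` steps of the stream `x`. -/
def seenSet (x : ℕ → X) (t : ℕ) : Set X := x '' {i | i < t}

/-- The finite prefix `x₁, ..., x_t` of the stream, as a list. -/
def prefList (x : ℕ → X) (t : ℕ) : List X := List.ofFn (fun i : Fin t => x i)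

/-- The version space of `H` induced by the positive examples `S`. -/
def versionSpace (H : Set (Set X)) (S : Set X) : Set (Set X) := {h | h ∈ H ∧ S ⊆ h}

/-- The closure `⟨S⟩_H`: common positive examples of all consistent hypotheses. -/
def hclosure (H : Set (Set X)) (S : Set X) : Set X := ⋂₀ versionSpace H S

/-- There exist `d` distinct examples with nonempty version space and finite closure. -/
def FinClosureWitness (H : Set (Set X)) (d : ℕ) : Prop :=
  ∃ S : Finset X, S.card = d ∧ (versionSpace H ↑S).Nonempty ∧ (hclosure H ↑S).Finite

/-- The Closure dimension of `H` is infinite. -/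
def ClosureDimInf (H : Set (Set X)) : Prop := ∀ n : ℕ, ∃ d, n ≤ d ∧ FinClosureWitness H d

/-- The Closure dimension of `H` is at most `d`. -/
def ClosureDimLE (H : Set (Set X)) (d : ℕ) : Prop := ∀ d', d < d' → ¬ FinClosureWitness H d'

/-- Uniformly Unbounded Support property. -/
def UUS (H : Set (Set X)) : Prop := ∀ h ∈ H, h.Infinite

/-- The generator `G` outputs an unseen positive example of `h` at step `s`. -/
def GenOK (G : List X → X) (h : Set X) (x : ℕ → X) (s : ℕ) : Prop :=
  G (prefList x s) ∈ h \ seenSet x s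

def UniformlyGeneratable (H : Set (Set X)) : Prop :=
  ∃ G : List X → X, ∃ d : ℕ, ∀ h ∈ H, ∀ x : ℕ → X, (∀ i, x i ∈ h) →
    ∀ t, (seenSet x t).ncard = d → ∀ s, t ≤ s → GenOK G h x s

def NonUniformlyGeneratable (H : Set (Set X)) : Prop :=
  ∃ G : List X → X, ∀ h ∈ H, ∃ d : ℕ, ∀ x : ℕ → X, (∀ i, x i ∈ h) →
    ∀ t, (seenSet x t).ncard = d → ∀ s, t ≤ s → GenOK G h x s

/-- `x` is an enumeration of the support `h`. -/
def IsEnum (h : Set X) (x : ℕ → X) : Prop := (∀ i, x i ∈ h) ∧ ∀ y ∈ h, ∃ i, x i = y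

def GeneratableInLimit (H : Set (Set X)) : Prop :=
  ∃ G : List X → X, ∀ h ∈ H, ∀ x : ℕ → X, IsEnum h x →
    ∃ t, ∀ s, t ≤ s → GenOK G h x s

/-- `H` shatters the finite set `S` (VC-style shattering). -/
def Shatters {X : Type*} (H : Set (Set X)) (S : Finset X) : Prop :=
  ∀ T ⊆ S, ∃ h ∈ H, ∀ x ∈ S, (x ∈ h ↔ x ∈ T)

/-- The class `{x ↦ 1[x ∈ A or x ≤ 0] : A ⊆ ℕ, |A| < ∞}` over `ℤ`. -/
def Hfin : Set (Set ℤ) :=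
  {h | ∃ A : Set ℤ, A.Finite ∧ (∀ a ∈ A, 0 < a) ∧ h = A ∪ {x : ℤ | x ≤ 0}}

/-- a countable UUS class with Closure dimension 0 (hence uniformly
generatable) but infinite VC dimension (hence not PAC learnable). -/
lemma foldr_min_le (l : List ℤ) : ∀ a ∈ l, l.foldr min 0 ≤ a := by
  induction l with
  | nil => intro a ha; simp at ha
  | cons b l ih =>
    intro a ha
    rcases List.mem_cons.mp ha with h | h
    · subst h; exact min_le_left _ _
    · exact le_trans (min_le_right _ _) (ih a h)

lemma foldr_min_nonpos (l : List ℤ) : l.foldr min 0 ≤ 0 := by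
  induction l with
  | nil => simp
  | cons b l ih => exact le_trans (min_le_right _ _) ih

theorem stmt16 :
    Hfin.Countable ∧ UUS Hfin ∧ ClosureDimLE Hfin 0 ∧ UniformlyGeneratable Hfin ∧
    ∀ n : ℕ, ∃ S : Finset ℤ, S.card = n ∧ Shatters Hfin S := by
  refine ⟨?_, ?_, ?_, ?_, ?_⟩
  · -- countable
    have hc : {A : Set ℤ | A.Finite}.Countable := by
      have := Set.countable_setOf_finite_subset (Set.countable_univ (α := ℤ))
      refine this.mono ?_
      intro A hA; exact ⟨hA, Set.subset_univ A⟩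
    have : Hfin ⊆ (fun A : Set ℤ => A ∪ {x : ℤ | x ≤ 0}) '' {A : Set ℤ | A.Finite} := by
      rintro h ⟨A, hAfin, -, rfl⟩
      exact ⟨A, hAfin, rfl⟩
    exact (hc.image _).mono this
  · -- UUS
    rintro h ⟨A, -, -, rfl⟩
    have : {x : ℤ | x ≤ 0}.Infinite :=
      Set.infinite_of_injective_forall_mem (f := fun n : ℕ => -(n : ℤ))
        (fun a b hab => by simpa using hab) (fun n => by simp)
    exact this.mono (Set.subset_union_right)
  · -- ClosureDimLE 0
    intro d' hd' ⟨S, hcard, hvs, hfin⟩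
    have hsub : {x : ℤ | x ≤ 0} ⊆ hclosure Hfin ↑S := by
      intro y hy
      intro h hh
      obtain ⟨⟨A, -, -, rfl⟩, -⟩ := hh
      exact Or.inr hy
    have : ({x : ℤ | x ≤ 0} : Set ℤ).Infinite :=
      Set.infinite_of_injective_forall_mem (f := fun n : ℕ => -(n : ℤ))
        (fun a b hab => by simpa using hab) (fun n => by simp)
    exact this (hfin.subset hsub)
  · -- UniformlyGeneratable
    refine ⟨fun l => l.foldr min 0 - 1, 0, ?_⟩
    rintro h ⟨A, -, -, rfl⟩ x hx t ht s hs
    show (fun l : List ℤ => l.foldr min 0 - 1) (prefList x s) ∈ _ \ _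
    simp only
    constructor
    · right
      simp only [Set.mem_setOf_eq]
      have := foldr_min_nonpos (prefList x s)
      omega
    · rintro ⟨i, hi, hxi⟩
      have hmem : x i ∈ prefList x s := by
        simp only [prefList, List.mem_ofFn]
        exact ⟨⟨i, hi⟩, rfl⟩
      have := foldr_min_le (prefList x s) (x i) hmem
      omega
  · -- shattering
    intro n
    refine ⟨(Finset.range n).image (fun i : ℕ => ((i : ℤ) + 1)), ?_, ?_⟩
    · rw [Finset.card_image_of_injective]
      · exact Finset.card_range n
      · intro a b hab; simpa using hab
    · intro T hT
      refine ⟨↑T ∪ {x : ℤ | x ≤ 0}, ⟨↑T, T.finite_toSet, ?_, rfl⟩, ?_⟩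
      · intro a ha
        have := hT ha
        simp only [Finset.mem_image, Finset.mem_range] at this
        obtain ⟨i, -, rfl⟩ := this
        positivity
      · intro y hy
        simp only [Finset.mem_image, Finset.mem_range] at hy
        obtain ⟨i, -, rfl⟩ := hy
        simp only [Set.mem_union, Finset.mem_coe, Set.mem_setOf_eq]
        constructor
        · rintro (h | h)
          · exact h
          · exfalso; omega
        · exact Or.inl
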